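/- If there exists a 0-dimensional compact Hausdorff hereditarily Lindelöf non-separable space, then there exists a σ-compact, hereditarily Lindelöf, 0-dimensional Hausdorff space that is not countably tight but in which the closure of every discrete subset is first countable. -/

import Mathlib

open Set Topology TopologicalSpace

/-- A space is countably tight if every point in the closure of a set is in the
closure of a countable subset of it. -/
def CountablyTight (Y : Type*) [TopologicalSpace Y] : Prop :=
  ∀ (A : Set Y) (y : Y), y ∈ closure A →
    ∃ C : Set Y, C ⊆ A ∧ C.Countable ∧ y ∈ closure C

/-- A 0-dimensional compact L-space: compact Hausdorff hereditarily Lindelöf,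
non-separable, with a base of clopen sets. -/
def ZeroDimCompactLSpace (X : Type) [TopologicalSpace X] : Prop :=
  CompactSpace X ∧ T2Space X ∧ HereditarilyLindelofSpace X ∧ ¬ SeparableSpace X ∧
    IsTopologicalBasis {s : Set X | IsClopen s}

/-- A σ-compact, hereditarily Lindelöf, 0-dimensional Hausdorff space that is not
countably tight but in which the closure of every discrete subset is first
countable. -/
def TkachukCounterexample (Y : Type) [TopologicalSpace Y] : Prop :=
  SigmaCompactSpace Y ∧ HereditarilyLindelofSpace Y ∧ T2Space Y ∧
    IsTopologicalBasis {s : Set Y | IsClopen s} ∧ ¬ CountablyTight Y ∧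
    ∀ D : Set Y, DiscreteTopology ↥D → FirstCountableTopology ↥(closure D)


section Aux

open Filter

set_option linter.unusedSectionVars false
set_option linter.unusedVariables false
set_option linter.unnecessarySimpa false

section Util
variable {X : Type*} [TopologicalSpace X]

/-- Hereditarily Lindelöf is hereditary (to subtypes). -/
lemma hl_subtype [HereditarilyLindelofSpace X] (Y : Set X) : HereditarilyLindelofSpace Y := by
  constructor
  intro t _
  have h1 : IsLindelof ((↑) '' t : Set X) := HereditarilyLindelof_LindelofSets _
  exact (IsEmbedding.subtypeVal.isLindelof_iff).mpr h1

/-- clopen basis passes to subspaces -/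
lemma clopen_basis_subtype (hb : IsTopologicalBasis {s : Set X | IsClopen s}) (Y : Set X) :
    IsTopologicalBasis {s : Set Y | IsClopen s} := by
  refine isTopologicalBasis_of_isOpen_of_nhds (fun u hu => hu.isOpen) ?_
  intro x u hxu hu
  obtain ⟨v, hv, hxv, hvu⟩ := (hb.induced ((↑) : Y → X)).exists_subset_of_mem_open hxu hu
  obtain ⟨w, hw, rfl⟩ := hv
  exact ⟨(↑) ⁻¹' w, hw.preimage continuous_subtype_val, hxv, hvu⟩

/-- In a space with a clopen basis, every nonempty open set contains a nonempty clopen set. -/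
lemma exists_clopen_nonempty_subset (hb : IsTopologicalBasis {s : Set X | IsClopen s})
    {U : Set X} (hU : IsOpen U) (hne : U.Nonempty) :
    ∃ V : Set X, IsClopen V ∧ V.Nonempty ∧ V ⊆ U := by
  obtain ⟨x, hx⟩ := hne
  obtain ⟨v, hv, hxv, hvu⟩ := hb.exists_subset_of_mem_open hx hU
  exact ⟨v, hv, ⟨x, hxv⟩, hvu⟩

end Util

section FC
variable {X : Type*} [TopologicalSpace X]

/-- A compact Hausdorff hereditarily Lindelöf space is first countable. -/
lemma firstCountable_of_chl [CompactSpace X] [T2Space X] [HereditarilyLindelofSpace X] :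
    FirstCountableTopology X := by
  constructor
  intro x
  -- for each y ≠ x, an open set containing y whose closure misses x
  have hV : ∀ y : X, y ≠ x → ∃ V : Set X, IsOpen V ∧ y ∈ V ∧ x ∉ closure V := by
    intro y hy
    obtain ⟨u, v, hu, hv, hyu, hxv, huv⟩ := t2_separation hy
    refine ⟨u, hu, hyu, fun hx => ?_⟩
    have : closure u ⊆ vᶜ := closure_minimal (fun z hz hzv => huv.le_bot ⟨hz, hzv⟩) hv.isClosed_compl
    exact this hx hxv
  classical
  set ι := {y : X // y ≠ x} with hι
  set V : ι → Set X := fun y => (hV y.1 y.2).choose with hVdef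
  have hVopen : ∀ i : ι, IsOpen (V i) := fun i => (hV i.1 i.2).choose_spec.1
  have hVmem : ∀ i : ι, i.1 ∈ V i := fun i => (hV i.1 i.2).choose_spec.2.1
  have hVx : ∀ i : ι, x ∉ closure (V i) := fun i => (hV i.1 i.2).choose_spec.2.2
  have hlin : IsLindelof ({x}ᶜ : Set X) := HereditarilyLindelof_LindelofSets _
  have hcov : ({x}ᶜ : Set X) ⊆ ⋃ i : ι, V i := by
    intro y hy
    exact mem_iUnion.mpr ⟨⟨y, hy⟩, hVmem ⟨y, hy⟩⟩
  obtain ⟨r, hrc, hrcov⟩ := hlin.elim_countable_subcover V hVopen hcov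
  -- countable family of open sets with intersection {x}
  set G : Set (Set X) := insert univ ((fun i => (closure (V i))ᶜ) '' r) with hG
  have hGc : G.Countable := (hrc.image _).insert _
  have hGne : G.Nonempty := ⟨univ, mem_insert _ _⟩
  have hGopen : ∀ g ∈ G, IsOpen g := by
    rintro g (rfl | ⟨i, _, rfl⟩)
    · exact isOpen_univ
    · exact isClosed_closure.isOpen_compl
  have hGx : ∀ g ∈ G, x ∈ g := by
    rintro g (rfl | ⟨i, _, rfl⟩)
    · trivial
    · exact hVx i
  have hGsingle : ⋂₀ G = {x} := by
    apply Subset.antisymm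
    · intro z hz
      by_contra hzx
      have hz' : z ∈ ({x}ᶜ : Set X) := hzx
      obtain ⟨i, hir, hzi⟩ := mem_iUnion₂.mp (hrcov hz')
      have : z ∈ (closure (V i))ᶜ := hz _ (mem_insert_iff.mpr (Or.inr ⟨i, hir, rfl⟩))
      exact this (subset_closure hzi)
    · rintro z rfl
      exact fun g hg => hGx g hg
  obtain ⟨f, hf⟩ := (Set.countable_iff_exists_surjective ⟨univ, mem_insert _ _⟩).mp hGc
  set fo : ℕ → Set X := fun n => (f n).1 with hfo
  have hfoopen : ∀ n, IsOpen (fo n) := fun n => hGopen _ (f n).2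
  have hfox : ∀ n, x ∈ fo n := fun n => hGx _ (f n).2
  have hfoint : (⋂ n, fo n) ⊆ {x} := by
    intro z hz
    rw [← hGsingle]
    intro g hg
    obtain ⟨n, hn⟩ := hf ⟨g, hg⟩
    have h2 := mem_iInter.mp hz n
    have h3 : fo n = g := by rw [hfo]; simp only [hn]
    rwa [h3] at h2
  -- regularity step
  have step : ∀ U : Set X, IsOpen U → x ∈ U → ∃ O : Set X, IsOpen O ∧ x ∈ O ∧ closure O ⊆ U := by
    intro U hU hxU
    obtain ⟨t, ht, htc, htU⟩ := exists_mem_nhds_isClosed_subset (hU.mem_nhds hxU)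
    refine ⟨interior t, isOpen_interior, mem_interior_iff_mem_nhds.mpr ht, ?_⟩
    calc closure (interior t) ⊆ closure t := closure_mono interior_subset
    _ = t := htc.closure_eq
    _ ⊆ U := htU
  set nxt : Set X → Set X := fun U => if h : IsOpen U ∧ x ∈ U then (step U h.1 h.2).choose else univ
    with hnxt
  have hnxt1 : ∀ U : Set X, IsOpen U → x ∈ U →
      IsOpen (nxt U) ∧ x ∈ nxt U ∧ closure (nxt U) ⊆ U := by
    intro U h1 h2
    rw [hnxt]; simp only [dif_pos (And.intro h1 h2)]
    exact (step U h1 h2).choose_spec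
  set g : ℕ → Set X := fun n => Nat.rec (nxt (fo 0)) (fun n W => nxt (W ∩ fo (n + 1))) n with hg
  have hg0 : g 0 = nxt (fo 0) := rfl
  have hgs : ∀ n, g (n + 1) = nxt (g n ∩ fo (n + 1)) := fun n => rfl
  have hgbasic : ∀ n, IsOpen (g n) ∧ x ∈ g n := by
    intro n
    induction n with
    | zero =>
      have := hnxt1 (fo 0) (hfoopen 0) (hfox 0)
      exact ⟨this.1, this.2.1⟩
    | succ n ih =>
      rw [hgs]
      have := hnxt1 (g n ∩ fo (n + 1)) (ih.1.inter (hfoopen (n + 1))) ⟨ih.2, hfox (n + 1)⟩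
      exact ⟨this.1, this.2.1⟩
  have hgcl : ∀ n, closure (g (n + 1)) ⊆ g n ∩ fo (n + 1) := by
    intro n
    rw [hgs]
    exact (hnxt1 _ ((hgbasic n).1.inter (hfoopen (n + 1))) ⟨(hgbasic n).2, hfox (n + 1)⟩).2.2
  have hgcl0 : closure (g 0) ⊆ fo 0 := by
    rw [hg0]
    exact (hnxt1 _ (hfoopen 0) (hfox 0)).2.2
  have hgfo : ∀ n, closure (g n) ⊆ fo n := by
    intro n
    cases n with
    | zero => exact hgcl0
    | succ n => exact (hgcl n).trans inter_subset_right
  have hganti : ∀ i j, i ≤ j → g j ⊆ g i := by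
    intro i j hij
    induction j with
    | zero => rw [Nat.le_zero.mp hij]
    | succ j ih =>
      rcases Nat.lt_or_ge i (j + 1) with h | h
      · exact (subset_closure.trans ((hgcl j).trans inter_subset_left)).trans
          (ih (Nat.lt_succ_iff.mp h))
      · rw [Nat.le_antisymm hij h]
  -- g is a neighborhood basis of x
  have hbasis : (𝓝 x).HasBasis (fun _ : ℕ => True) g := by
    constructor
    intro t
    constructor
    · intro ht
      obtain ⟨U, hUt, hU, hxU⟩ := mem_nhds_iff.mp ht
      set F : ℕ → Set X := fun n => closure (g n) ∩ Uᶜ with hF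
      have hFclosed : ∀ n, IsClosed (F n) := fun n => isClosed_closure.inter hU.isClosed_compl
      have hFempty : (univ : Set X) ∩ ⋂ n, F n = ∅ := by
        rw [univ_inter]
        ext z
        simp only [mem_iInter, mem_empty_iff_false, iff_false]
        intro hz
        have hz1 : z ∈ ⋂ n, fo n := mem_iInter.mpr fun n => hgfo n (hz n).1
        have := hfoint hz1
        rw [mem_singleton_iff] at this
        subst this
        exact (hz 0).2 hxU
      obtain ⟨u, hu⟩ := isCompact_univ.elim_finite_subfamily_closed F hFclosed hFempty
      rw [univ_inter] at hu
      set n := u.sup id with hn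
      refine ⟨n, trivial, ?_⟩
      have hFn : F n = ∅ := by
        rw [← subset_empty_iff, ← hu]
        intro z hz
        exact mem_iInter₂.mpr fun i hi =>
          ⟨closure_mono (hganti i n (Finset.le_sup (f := id) hi)) hz.1, hz.2⟩
      intro z hz
      by_contra hzU
      have : z ∈ F n := ⟨subset_closure hz, fun hh => hzU (hUt hh)⟩
      rw [hFn] at this
      exact this
    · rintro ⟨n, -, hsub⟩
      exact mem_of_superset ((hgbasic n).1.mem_nhds (hgbasic n).2) hsub
  exact hbasis.isCountablyGenerated

/-- Every non-separable hereditarily Lindelöf space has a nonempty closed "nowhere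
separable kernel". -/
lemma exists_kernel [HereditarilyLindelofSpace X] (hnsep : ¬ SeparableSpace X) :
    ∃ Y : Set X, IsClosed Y ∧ Y.Nonempty ∧
      ∀ V : Set X, IsOpen V → (V ∩ Y).Nonempty → ∀ D : Set X, D.Countable →
        ¬ (V ∩ Y ⊆ closure D) := by
  classical
  set U : Set (Set X) := {u | IsOpen u ∧ ∃ D : Set X, D.Countable ∧ u ⊆ closure D} with hU
  set V : Set X := ⋃₀ U with hV
  have hVopen : IsOpen V := isOpen_sUnion fun u hu => hu.1
  -- V itself is contained in the closure of a countable set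
  have hVsep : ∃ D₀ : Set X, D₀.Countable ∧ V ⊆ closure D₀ := by
    have hlin : IsLindelof V := HereditarilyLindelof_LindelofSets _
    have hcov : V ⊆ ⋃ u : U, (u : Set X) := by
      intro z hz
      obtain ⟨u, hu, hzu⟩ := hz
      exact mem_iUnion.mpr ⟨⟨u, hu⟩, hzu⟩
    obtain ⟨r, hrc, hrcov⟩ := hlin.elim_countable_subcover (fun u : U => (u : Set X))
      (fun u => u.2.1) hcov
    set Dfun : U → Set X := fun u => u.2.2.choose with hDfun
    refine ⟨⋃ u ∈ r, Dfun u, hrc.biUnion fun u _ => u.2.2.choose_spec.1, ?_⟩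
    intro z hz
    obtain ⟨u, hur, hzu⟩ := mem_iUnion₂.mp (hrcov hz)
    exact closure_mono (subset_biUnion_of_mem hur) (u.2.2.choose_spec.2 hzu)
  obtain ⟨D₀, hD₀c, hD₀⟩ := hVsep
  refine ⟨Vᶜ, hVopen.isClosed_compl, ?_, ?_⟩
  · by_contra h
    rw [not_nonempty_iff_eq_empty, compl_empty_iff] at h
    refine hnsep ⟨D₀, hD₀c, ?_⟩
    rw [dense_iff_closure_eq, ← univ_subset_iff, ← h]
    exact hD₀
  · intro W hWopen hWne D hDc hsub
    -- W ⊆ closure (D ∪ D₀), so W ∈ U, so W ⊆ V; contradiction with (W ∩ Vᶜ).Nonempty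
    have hWU : W ∈ U := by
      refine ⟨hWopen, D ∪ D₀, hDc.union hD₀c, ?_⟩
      intro z hz
      by_cases hzV : z ∈ V
      · exact closure_mono subset_union_right (hD₀ hzV)
      · exact closure_mono subset_union_left (hsub ⟨hz, hzV⟩)
    obtain ⟨z, hzW, hzY⟩ := hWne
    exact hzY (subset_sUnion_of_mem hWU hzW)
end FC

noncomputable section Chain


abbrev om1 : Ordinal := (Cardinal.aleph 1).ord

lemma countable_lt_om1 {o : Ordinal.{0}} (h : o < om1) : Countable (Set.Iio o) := by
  have h1 : o.card < Cardinal.aleph 1 := Cardinal.lt_ord.mp h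
  have h2 : o.card ≤ Cardinal.aleph0 := by
    rwa [← Cardinal.succ_aleph0, Order.lt_succ_iff] at h1
  have h3 : Cardinal.mk (Set.Iio o) ≤ Cardinal.aleph0 := by
    rw [Ordinal.mk_Iio_ordinal]
    have := Cardinal.lift_le.mpr h2
    simpa using this
  exact Cardinal.mk_le_aleph0_iff.mp h3

lemma succ_lt_om1 {o : Ordinal} (h : o < om1) : o + 1 < om1 := by
  rw [Ordinal.add_one_eq_succ]
  exact (Cardinal.isSuccLimit_ord (Cardinal.aleph0_le_aleph 1)).succ_lt h

lemma sup_lt_om1 {α : Type} [Countable α] (f : α → Ordinal) (h : ∀ a, f a < om1) :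
    (⨆ a, f a) < om1 := by
  simp only [om1, Cardinal.ord_aleph] at *
  exact Ordinal.iSup_lt_omega_one h

lemma le_sup_om1 {α : Type} [Countable α] (f : α → Ordinal) (a : α) : f a ≤ ⨆ a, f a := by
  have : Small.{0} α := Countable.toSmall (α := α)
  exact Ordinal.le_iSup f a

lemma exists_chain {X : Type} [TopologicalSpace X] [CompactSpace X] [T2Space X]
    [HereditarilyLindelofSpace X] (hnsep : ¬ SeparableSpace X) :
    ∃ K : Set X, K.Nonempty ∧ IsClosed K ∧ ∃ c : {o : Ordinal.{0} // o < om1} → Set X,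
      (∀ α, IsClosed (c α)) ∧ (∀ α β, α ≤ β → c α ⊆ c β) ∧ (∀ α, c α ⊆ K) ∧
      (∀ z ∈ K, ∃ α, z ∈ c α) ∧
      (∀ (α) (V : Set X), IsOpen V → (V ∩ K).Nonempty → ¬ (V ∩ K ⊆ c α)) := by
  classical
  haveI : FirstCountableTopology X := firstCountable_of_chl
  obtain ⟨Y, hYclosed, hYne, hNTS⟩ := exists_kernel hnsep
  obtain ⟨y₀, hy₀⟩ := hYne
  -- neighborhood bases
  have hbas : ∀ x : X, ∃ b : ℕ → Set X, (∀ k, b k ∈ 𝓝 x) ∧ ∀ U ∈ 𝓝 x, ∃ k, b k ⊆ U := by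
    intro x
    obtain ⟨b, hb⟩ := (𝓝 x).exists_antitone_basis
    refine ⟨b, fun k => hb.toHasBasis.mem_of_mem trivial, fun U hU => ?_⟩
    obtain ⟨k, -, h⟩ := hb.toHasBasis.mem_iff.mp hU
    exact ⟨k, h⟩
  set b : X → ℕ → Set X := fun x => (hbas x).choose with hbdef
  have hb1 : ∀ x k, b x k ∈ 𝓝 x := fun x => (hbas x).choose_spec.1
  have hb2 : ∀ x, ∀ U ∈ 𝓝 x, ∃ k, b x k ⊆ U := fun x => (hbas x).choose_spec.2
  set pick : X → ℕ → Set X → X := fun x k A =>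
    if h : ((interior (b x k) ∩ Y) \ closure A).Nonempty then h.choose else y₀ with hpickdef
  have hpickmem : ∀ x k A, ((interior (b x k) ∩ Y) \ closure A).Nonempty →
      pick x k A ∈ (interior (b x k) ∩ Y) \ closure A := by
    intro x k A h
    simp only [hpickdef, dif_pos h]
    exact h.choose_spec
  have hpickY : ∀ x k A, pick x k A ∈ Y := by
    intro x k A
    by_cases h : ((interior (b x k) ∩ Y) \ closure A).Nonempty
    · exact (hpickmem x k A h).1.2
    · simp only [hpickdef, dif_neg h]
      exact hy₀
  set step : Set X → Set X := fun A => A ∪ {y₀} ∪ ⋃ x ∈ A, ⋃ k : ℕ, {pick x k A}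
    with hstepdef
  set S : Ordinal.{0} → Set X :=
    WellFounded.fix Ordinal.lt_wf (fun o ih => step (⋃ o' : Set.Iio o, ih o'.1 o'.2)) with hSdef
  have hSeq : ∀ o, S o = step (⋃ o' : Set.Iio o, S o'.1) := by
    intro o
    rw [hSdef]
    exact WellFounded.fix_eq _ _ _
  have hy₀S : ∀ o, y₀ ∈ S o := by
    intro o
    rw [hSeq]
    exact Or.inl (Or.inr rfl)
  have hSY : ∀ o, S o ⊆ Y := by
    intro o
    induction o using Ordinal.induction with
    | h o IH =>
      rw [hSeq]
      rintro z (((h | rfl) | h))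
      · obtain ⟨o', hz⟩ := mem_iUnion.mp h
        exact IH o'.1 o'.2 hz
      · exact hy₀
      · simp only [mem_iUnion] at h
        obtain ⟨x, hx, k, hz⟩ := h
        rw [mem_singleton_iff] at hz
        subst hz
        exact hpickY x k _
  have hmono : ∀ o' o : Ordinal, o' < o → S o' ⊆ S o := by
    intro o' o h
    rw [hSeq o]
    intro z hz
    exact Or.inl (Or.inl (mem_iUnion.mpr ⟨⟨o', h⟩, hz⟩))
  have hprevc : ∀ o, o < om1 → (∀ o' < o, (S o').Countable) →
      (⋃ o' : Set.Iio o, S o'.1).Countable := by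
    intro o ho IH
    haveI := countable_lt_om1 ho
    exact countable_iUnion fun o' => IH o'.1 o'.2
  have hcount : ∀ o, o < om1 → (S o).Countable := by
    intro o
    induction o using Ordinal.induction with
    | h o IH =>
      intro ho
      rw [hSeq]
      have hA : (⋃ o' : Set.Iio o, S o'.1).Countable :=
        hprevc o ho (fun o' h => IH o' h (h.trans ho))
      refine (hA.union (countable_singleton _)).union ?_
      exact (hA.biUnion fun x _ => countable_iUnion fun k => countable_singleton _)
  have hdense : ∀ o₁ o₂ : Ordinal, o₁ < om1 → o₂ < om1 → ∀ x ∈ S o₁, ∀ U ∈ 𝓝 x,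
      ∃ y, y ∈ S (max o₁ o₂ + 1) ∧ y ∈ U ∧ y ∉ closure (S o₂) := by
    intro o₁ o₂ ho₁ ho₂ x hx U hU
    set o := max o₁ o₂ with hodef
    set A : Set X := ⋃ o' : Set.Iio (o + 1), S o'.1 with hAdef
    have hoom : o + 1 < om1 := succ_lt_om1 (max_lt ho₁ ho₂)
    have hsub : ∀ o' ≤ o, S o' ⊆ A := by
      intro o' ho' z hz
      refine mem_iUnion.mpr ⟨⟨o', lt_of_le_of_lt ho' ?_⟩, hz⟩
      rw [Ordinal.add_one_eq_succ]
      exact Order.lt_succ o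
    have hxA : x ∈ A := hsub o₁ (le_max_left _ _) hx
    have hAc : A.Countable := hprevc (o + 1) hoom
      (fun o' h => hcount o' (h.trans hoom))
    obtain ⟨k, hk⟩ := hb2 x U hU
    have hne : ((interior (b x k) ∩ Y) \ closure A).Nonempty := by
      by_contra h
      rw [not_nonempty_iff_eq_empty, diff_eq_empty] at h
      exact hNTS (interior (b x k)) isOpen_interior
        ⟨x, mem_interior_iff_mem_nhds.mpr (hb1 x k), hSY o₁ hx⟩ A hAc h
    have hmem := hpickmem x k A hne
    refine ⟨pick x k A, ?_, ?_, ?_⟩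
    · rw [hSeq (o + 1)]
      refine Or.inr ?_
      simp only [mem_iUnion]
      exact ⟨x, mem_iUnion.mp hxA, k, rfl⟩
    · exact hk (interior_subset hmem.1.1)
    · intro hcl
      exact hmem.2 (closure_mono (hsub o₂ (le_max_right _ _)) hcl)
  -- the final objects
  set Stot : Set X := ⋃ α : {o : Ordinal.{0} // o < om1}, S α.1 with hStotdef
  set K : Set X := closure Stot with hKdef
  have hStotK : Stot ⊆ K := subset_closure
  have hSK : ∀ α : {o : Ordinal.{0} // o < om1}, S α.1 ⊆ Stot :=
    fun α z hz => mem_iUnion.mpr ⟨α, hz⟩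
  refine ⟨K, ⟨y₀, hStotK (hSK ⟨0, (Cardinal.isSuccLimit_ord (Cardinal.aleph0_le_aleph 1)).pos⟩ (hy₀S 0))⟩,
    isClosed_closure, fun α => closure (S α.1), fun α => isClosed_closure, ?_, ?_, ?_, ?_⟩
  · intro α β hab
    rcases eq_or_lt_of_le hab with h | h
    · rw [h]
    · exact closure_mono (hmono _ _ (Subtype.coe_lt_coe.2 h))
  · intro α
    exact closure_mono (hSK α)
  · intro z hz
    obtain ⟨u, hu, hulim⟩ := mem_closure_iff_seq_limit.mp hz
    have hg : ∀ n : ℕ, ∃ α : {o : Ordinal.{0} // o < om1}, u n ∈ S α.1 :=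
      fun n => mem_iUnion.mp (hu n)
    have hg' : ∀ n : ℕ, (hg n).choose.1 < om1 := fun n => (hg n).choose.2
    refine ⟨⟨⨆ n, (hg n).choose.1, sup_lt_om1 _ hg'⟩, ?_⟩
    have huo : ∀ n, u n ∈ S (⨆ n, (hg n).choose.1) := by
      intro n
      rcases eq_or_lt_of_le (le_sup_om1 (fun n => (hg n).choose.1) n) with h | h
      · rw [← h]; exact (hg n).choose_spec
      · exact hmono _ _ h (hg n).choose_spec
    exact mem_closure_of_tendsto hulim (Eventually.of_forall huo)
  · intro α V hV hVK hsubK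
    obtain ⟨z, hzV, hzK⟩ := hVK
    obtain ⟨x, hxV, hxS⟩ := mem_closure_iff.mp hzK V hV hzV
    obtain ⟨α₁, hα₁⟩ := mem_iUnion.mp hxS
    obtain ⟨y, hyS, hyV, hycl⟩ := hdense α₁.1 α.1 α₁.2 α.2 x hα₁ V (hV.mem_nhds hxV)
    have hyK : y ∈ K := hStotK (hSK ⟨max α₁.1 α.1 + 1, succ_lt_om1 (max_lt α₁.2 α.2)⟩ hyS)
    exact hycl (hsubK ⟨hyV, hyK⟩)


section TowerSec
variable {Z : Type} [TopologicalSpace Z]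


section Diagonal

variable [Nonempty Z]

/-- Key step: a nonempty clopen subset of a nonempty clopen set minus a "nowhere dense" set. -/
lemma exists_clopen_avoid (hbasis : IsTopologicalBasis {s : Set Z | IsClopen s})
    {U c₀ : Set Z} (hU : IsClopen U) (hUne : U.Nonempty) (hc₀ : IsClosed c₀)
    (hnwd : ∀ V : Set Z, IsOpen V → V.Nonempty → ¬ V ⊆ c₀) :
    ∃ V : Set Z, IsClopen V ∧ V.Nonempty ∧ V ⊆ U \ c₀ := by
  have hopen : IsOpen (U \ c₀) := hU.isOpen.sdiff hc₀
  have hne : (U \ c₀).Nonempty := by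
    by_contra h
    rw [not_nonempty_iff_eq_empty, diff_eq_empty] at h
    exact hnwd U hU.isOpen hUne h
  exact exists_clopen_nonempty_subset hbasis hopen hne

/-- The diagonalization lemma: given a countable linearly ordered family of sequences of
nonempty clopen sets, decreasing modulo tails, we can find a sequence of nonempty clopen
sets avoiding a given nowhere dense closed set and eventually contained in each member. -/
lemma tk_diagonal (hbasis : IsTopologicalBasis {s : Set Z | IsClopen s})
    {P : Type*} [LinearOrder P] [Countable P]
    (T' : P → ℕ → Set Z)
    (h1 : ∀ p n, IsClopen (T' p n) ∧ (T' p n).Nonempty)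
    (h2 : ∀ p q : P, p ≤ q → ∃ m, ∀ n, m ≤ n → T' q n ⊆ T' p n)
    {c₀ : Set Z} (hc₀ : IsClosed c₀)
    (hnwd : ∀ V : Set Z, IsOpen V → V.Nonempty → ¬ V ⊆ c₀) :
    ∃ t : ℕ → Set Z, (∀ n, IsClopen (t n) ∧ (t n).Nonempty ∧ Disjoint (t n) c₀) ∧
      ∀ p : P, ∃ m, ∀ n, m ≤ n → t n ⊆ T' p n := by
  classical
  rcases isEmpty_or_nonempty P with hP | hP
  · have hV := exists_clopen_avoid hbasis isClopen_univ univ_nonempty hc₀ hnwd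
    refine ⟨fun _ => hV.choose, fun n => ⟨hV.choose_spec.1, hV.choose_spec.2.1, ?_⟩,
      fun p => (IsEmpty.false p).elim⟩
    exact disjoint_left.mpr fun z hz => ((hV.choose_spec.2.2 hz).2 ·)
  · obtain ⟨e, he⟩ := exists_surjective_nat P
    -- monotone cofinal sequence
    set β : ℕ → P := fun k => Nat.rec (e 0) (fun k b => max b (e (k + 1))) k with hβdef
    have hβ0 : β 0 = e 0 := rfl
    have hβs : ∀ k, β (k + 1) = max (β k) (e (k + 1)) := fun k => rfl
    have hβmono : ∀ j k, j ≤ k → β j ≤ β k := by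
      intro j k hjk
      induction k with
      | zero => rw [Nat.le_zero.mp hjk]
      | succ k ih =>
        rcases Nat.lt_or_ge j (k + 1) with h | h
        · exact (ih (Nat.lt_succ_iff.mp h)).trans (by rw [hβs]; exact le_max_left _ _)
        · rw [Nat.le_antisymm hjk h]
    have hβcof : ∀ p : P, ∃ k, p ≤ β k := by
      intro p
      obtain ⟨j, rfl⟩ := he p
      refine ⟨j, ?_⟩
      cases j with
      | zero => rw [hβ0]
      | succ j => rw [hβs]; exact le_max_right _ _
    -- eventual containment witnesses for consecutive terms
    set M : ℕ → ℕ := fun k => (h2 (β k) (β (k + 1)) (hβmono k (k + 1) (Nat.le_succ k))).choose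
      with hMdef
    have hM : ∀ k n, M k ≤ n → T' (β (k + 1)) n ⊆ T' (β k) n := fun k =>
      (h2 (β k) (β (k + 1)) (hβmono k (k + 1) (Nat.le_succ k))).choose_spec
    set N : ℕ → ℕ := fun k => (Finset.range k).sup M with hNdef
    have hN0 : N 0 = 0 := rfl
    have hNmono : ∀ j k, j ≤ k → N j ≤ N k := fun j k hjk =>
      Finset.sup_mono (Finset.range_subset_range.mpr hjk)
    have hchain : ∀ j k, j ≤ k → ∀ n, N k ≤ n → T' (β k) n ⊆ T' (β j) n := by
      intro j k hjk
      induction k with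
      | zero => rw [Nat.le_zero.mp hjk]; intro n _; rfl
      | succ k ih =>
        intro n hn
        rcases Nat.lt_or_ge j (k + 1) with h | h
        · have hkk : N k ≤ n := le_trans (hNmono k (k + 1) (Nat.le_succ k)) hn
          have h1' : T' (β (k + 1)) n ⊆ T' (β k) n :=
            hM k n (le_trans (Finset.le_sup (Finset.self_mem_range_succ k)) hn)
          exact h1'.trans (ih (Nat.lt_succ_iff.mp h) n hkk)
        · rw [Nat.le_antisymm hjk h]
    -- the diagonal index
    set g : ℕ → ℕ := fun n => Nat.findGreatest (fun k => N k ≤ n) n with hgdef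
    have hgN : ∀ n, N (g n) ≤ n := by
      intro n
      have h0 : (fun k => N k ≤ n) 0 := by simp only [hN0]; exact Nat.zero_le n
      have := Nat.findGreatest_spec (P := fun k => N k ≤ n) (m := 0) (Nat.zero_le n) h0
      simpa [hgdef] using this
    have hglarge : ∀ k n, N k ≤ n → k ≤ n → k ≤ g n := by
      intro k n h1' h2'
      have := Nat.le_findGreatest (P := fun k => N k ≤ n) h2' h1'
      simpa [hgdef] using this
    -- choose the diagonal sequence
    have hsel : ∀ n : ℕ, ∃ V : Set Z, IsClopen V ∧ V.Nonempty ∧ V ⊆ T' (β (g n)) n \ c₀ :=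
      fun n => exists_clopen_avoid hbasis (h1 (β (g n)) n).1 (h1 (β (g n)) n).2 hc₀ hnwd
    set t : ℕ → Set Z := fun n => (hsel n).choose with htdef
    have ht : ∀ n, IsClopen (t n) ∧ (t n).Nonempty ∧ t n ⊆ T' (β (g n)) n \ c₀ :=
      fun n => (hsel n).choose_spec
    refine ⟨t, fun n => ⟨(ht n).1, (ht n).2.1, ?_⟩, ?_⟩
    · exact disjoint_left.mpr fun z hz => (((ht n).2.2 hz).2 ·)
    · intro p
      obtain ⟨k, hk⟩ := hβcof p
      obtain ⟨m₀, hm₀⟩ := h2 p (β k) hk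
      refine ⟨max (max (N k) k) m₀, fun n hn => ?_⟩
      have h5 : k ≤ g n := hglarge k n
        (le_trans (le_max_left _ _) (le_trans (le_max_left _ _) hn))
        (le_trans (le_max_right _ _) (le_trans (le_max_left _ _) hn))
      calc t n ⊆ T' (β (g n)) n \ c₀ := (ht n).2.2
      _ ⊆ T' (β (g n)) n := diff_subset
      _ ⊆ T' (β k) n := hchain k (g n) h5 n (hgN n)
      _ ⊆ T' p n := hm₀ n (le_trans (le_max_right _ _) hn)

end Diagonal

section Tower

/-- build the ω₁-tower of clopen sequences -/
lemma exists_tower [Nonempty Z] (hbasis : IsTopologicalBasis {s : Set Z | IsClopen s})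
    (c : {o : Ordinal.{0} // o < om1} → Set Z)
    (hcclosed : ∀ α, IsClosed (c α))
    (hcmono : ∀ α β, α ≤ β → c α ⊆ c β)
    (hccover : ∀ z : Z, ∃ α, z ∈ c α)
    (hcnwd : ∀ α (V : Set Z), IsOpen V → V.Nonempty → ¬ (V ⊆ c α)) :
    ∃ T : {o : Ordinal.{0} // o < om1} → ℕ → Set Z,
      (∀ α n, IsClopen (T α n)) ∧ (∀ α n, (T α n).Nonempty) ∧
      (∀ α β, α ≤ β → ∃ m, ∀ n, m ≤ n → T β n ⊆ T α n) ∧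
      (∀ D : Set Z, D.Countable → ∃ α, ∀ n, Disjoint (T α n) D) := by
  classical
  -- extend c to all ordinals
  set cc : Ordinal.{0} → Set Z := fun o => if h : o < om1 then c ⟨o, h⟩ else ∅ with hccdef
  have hcc : ∀ (o) (h : o < om1), cc o = c ⟨o, h⟩ := by
    intro o h
    simp only [hccdef, dif_pos h]
  have hccnwd : ∀ o (V : Set Z), IsOpen V → V.Nonempty → ¬ (V ⊆ cc o) := by
    intro o V hV hVne hsub
    by_cases h : o < om1
    · rw [hcc o h] at hsub
      exact hcnwd ⟨o, h⟩ V hV hVne hsub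
    · simp only [hccdef, dif_neg h, subset_empty_iff] at hsub
      rw [hsub] at hVne
      exact (not_nonempty_empty hVne)
  -- the property defining stage o, given earlier stages
  set Good : Ordinal.{0} → (ℕ → Set Z) → (Ordinal.{0} → ℕ → Set Z) → Prop :=
    fun o t prev => (∀ n, IsClopen (t n) ∧ (t n).Nonempty ∧ Disjoint (t n) (cc o)) ∧
      ∀ o' : Ordinal, o' < o → ∃ m, ∀ n, m ≤ n → t n ⊆ prev o' n with hGooddef
  set Tf : Ordinal.{0} → ℕ → Set Z := WellFounded.fix Ordinal.lt_wf
    (fun o ih => if h : ∃ t : ℕ → Set Z,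
        (∀ n, IsClopen (t n) ∧ (t n).Nonempty ∧ Disjoint (t n) (cc o)) ∧
        ∀ o' : Ordinal, ∀ ho' : o' < o, ∃ m, ∀ n, m ≤ n → t n ⊆ ih o' ho' n
      then h.choose else fun _ => univ) with hTfdef
  have hTfeq : ∀ o, Tf o = if h : ∃ t : ℕ → Set Z,
      (∀ n, IsClopen (t n) ∧ (t n).Nonempty ∧ Disjoint (t n) (cc o)) ∧
      ∀ o' : Ordinal, ∀ _ : o' < o, ∃ m, ∀ n, m ≤ n → t n ⊆ Tf o' n
      then h.choose else fun _ => univ := by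
    intro o
    rw [hTfdef]
    exact WellFounded.fix_eq _ _ _
  -- main induction: every stage below om1 is good
  have hmain : ∀ o : Ordinal.{0}, o < om1 →
      (∀ n, IsClopen (Tf o n) ∧ (Tf o n).Nonempty ∧ Disjoint (Tf o n) (cc o)) ∧
      ∀ o' : Ordinal, o' < o → ∃ m, ∀ n, m ≤ n → Tf o n ⊆ Tf o' n := by
    intro o
    induction o using Ordinal.induction with
    | h o IH =>
      intro ho
      have hex : ∃ t : ℕ → Set Z,
          (∀ n, IsClopen (t n) ∧ (t n).Nonempty ∧ Disjoint (t n) (cc o)) ∧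
          ∀ o' : Ordinal, ∀ _ : o' < o, ∃ m, ∀ n, m ≤ n → t n ⊆ Tf o' n := by
        haveI : Countable (Set.Iio o) := countable_lt_om1 ho
        have hdiag := tk_diagonal hbasis (P := Set.Iio o) (fun o' => Tf o'.1)
          (fun o' n => ⟨(IH o'.1 o'.2 (o'.2.trans ho)).1 n |>.1,
            (IH o'.1 o'.2 (o'.2.trans ho)).1 n |>.2.1⟩)
          (fun p q hpq => ?_) (c₀ := cc o) ?_ ?_
        · obtain ⟨t, ht1, ht2⟩ := hdiag
          exact ⟨t, fun n => (ht1 n), fun o' ho' => ht2 ⟨o', ho'⟩⟩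
        · rcases eq_or_lt_of_le hpq with h | h
          · exact ⟨0, fun n _ => by rw [h]⟩
          · exact (IH q.1 q.2 (q.2.trans ho)).2 p.1 h
        · by_cases h : o < om1
          · rw [hcc o h]; exact hcclosed ⟨o, h⟩
          · simp only [hccdef, dif_neg h]; exact isClosed_empty
        · exact hccnwd o
      constructor
      · intro n
        rw [hTfeq o]
        simp only [dif_pos hex]
        exact hex.choose_spec.1 n
      · intro o' ho'
        rw [hTfeq o]
        simp only [dif_pos hex]
        exact hex.choose_spec.2 o' ho'
  refine ⟨fun α => Tf α.1, fun α n => ((hmain α.1 α.2).1 n).1,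
    fun α n => ((hmain α.1 α.2).1 n).2.1, ?_, ?_⟩
  · intro α β hab
    rcases eq_or_lt_of_le hab with h | h
    · exact ⟨0, fun n _ => by rw [h]⟩
    · exact (hmain β.1 β.2).2 α.1 (Subtype.coe_lt_coe.2 h)
  · intro D hD
    haveI := hD.to_subtype
    have hsel : ∀ d : D, ∃ α : {o : Ordinal.{0} // o < om1}, (d : Z) ∈ c α :=
      fun d => hccover d
    have hsup : (⨆ d : D, (hsel d).choose.1) < om1 := sup_lt_om1 _ fun d => (hsel d).choose.2
    refine ⟨⟨_, hsup⟩, fun n => ?_⟩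
    have hDc : D ⊆ c ⟨_, hsup⟩ := by
      intro z hz
      refine hcmono (hsel ⟨z, hz⟩).choose ⟨_, hsup⟩ ?_ (hsel ⟨z, hz⟩).choose_spec
      exact le_sup_om1 (fun d : D => (hsel d).choose.1) ⟨z, hz⟩
    have := ((hmain _ hsup).1 n).2.2
    rw [hcc _ hsup] at this
    exact this.mono_right hDc

end Tower

end TowerSec

section PartIISec
variable {Z : Type} [TopologicalSpace Z]


section PartII

variable {W : Type*} [LinearOrder W]

/-- The topology on `Option (ℕ × Z)`: the point `none` has neighbourhoods determined by
the tower `T`. -/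
def Ltop (T : W → ℕ → Set Z)
    (hTmono : ∀ α β : W, α ≤ β → ∃ m, ∀ n, m ≤ n → T β n ⊆ T α n) [Nonempty W] :
    TopologicalSpace (Option (ℕ × Z)) where
  IsOpen U := (∀ n : ℕ, IsOpen {z : Z | some (n, z) ∈ U}) ∧
    (none ∈ U → ∃ (α : W) (m : ℕ), ∀ n, m ≤ n → ∀ z ∈ T α n, some (n, z) ∈ U)
  isOpen_univ := by
    refine ⟨fun n => by simpa using isOpen_univ, fun _ => ?_⟩
    exact ⟨Classical.arbitrary W, 0, fun n _ z _ => mem_univ _⟩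
  isOpen_inter := by
    rintro U V ⟨hU1, hU2⟩ ⟨hV1, hV2⟩
    refine ⟨fun n => ?_, fun hn => ?_⟩
    · exact (hU1 n).inter (hV1 n)
    · obtain ⟨α₁, m₁, h₁⟩ := hU2 hn.1
      obtain ⟨α₂, m₂, h₂⟩ := hV2 hn.2
      obtain ⟨m₃, h₃⟩ := hTmono α₁ (max α₁ α₂) (le_max_left _ _)
      obtain ⟨m₄, h₄⟩ := hTmono α₂ (max α₁ α₂) (le_max_right _ _)
      refine ⟨max α₁ α₂, max (max m₁ m₂) (max m₃ m₄), fun n hn' z hz => ?_⟩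
      constructor
      · exact h₁ n (le_trans (le_trans (le_max_left _ _) (le_max_left _ _)) hn') z
          (h₃ n (le_trans (le_trans (le_max_left _ _) (le_max_right _ _)) hn') hz)
      · exact h₂ n (le_trans (le_trans (le_max_right _ _) (le_max_left _ _)) hn') z
          (h₄ n (le_trans (le_trans (le_max_right _ _) (le_max_right _ _)) hn') hz)
  isOpen_sUnion := by
    intro S hS
    refine ⟨fun n => ?_, fun hn => ?_⟩
    · have : {z : Z | some (n, z) ∈ ⋃₀ S} = ⋃ U ∈ S, {z : Z | some (n, z) ∈ U} := by
        ext z; simp [mem_sUnion]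
      rw [this]
      exact isOpen_biUnion fun U hU => (hS U hU).1 n
    · obtain ⟨U, hU, hnU⟩ := hn
      obtain ⟨α, m, h⟩ := (hS U hU).2 hnU
      exact ⟨α, m, fun n hn' z hz => ⟨U, hU, h n hn' z hz⟩⟩


theorem partII [CompactSpace Z] [T2Space Z] [HereditarilyLindelofSpace Z]
    [FirstCountableTopology Z] [Nonempty Z] [Nonempty W]
    (T : W → ℕ → Set Z)
    (hTclopen : ∀ α n, IsClopen (T α n))
    (hTne : ∀ α n, (T α n).Nonempty)
    (hTmono : ∀ α β : W, α ≤ β → ∃ m, ∀ n, m ≤ n → T β n ⊆ T α n)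
    (hTavoid : ∀ D : Set Z, D.Countable → ∃ α, ∀ n, Disjoint (T α n) D)
    (hZbasis : IsTopologicalBasis {s : Set Z | IsClopen s}) :
    @TkachukCounterexample (Option (ℕ × Z)) (Ltop T hTmono) := by
  classical
  letI tL : TopologicalSpace (Option (ℕ × Z)) := Ltop T hTmono
  let L := Option (ℕ × Z)
  have hopen_iff : ∀ U : Set L, IsOpen U ↔ ((∀ n : ℕ, IsOpen {z : Z | some (n, z) ∈ U}) ∧
      (none ∈ U → ∃ (α : W) (m : ℕ), ∀ n, m ≤ n → ∀ z ∈ T α n, some (n, z) ∈ U)) :=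
    fun U => Iff.rfl
  -- the levels
  set lev : ℕ → Set Z → Set L := fun n V => (fun z => (some (n, z) : L)) '' V with hlevdef
  have hlev_mem : ∀ n n' V z, ((some (n', z) : L) ∈ lev n V) ↔ (n' = n ∧ z ∈ V) := by
    intro n n' V z
    simp only [hlevdef, mem_image]
    constructor
    · rintro ⟨w, hw, heq⟩
      injection heq with h
      injection h with h1 h2
      exact ⟨h1.symm, h2 ▸ hw⟩
    · rintro ⟨rfl, hz⟩
      exact ⟨z, hz, rfl⟩
  have hlev_none : ∀ n V, (none : L) ∉ lev n V := by
    rintro n V ⟨w, -, h⟩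
    exact Option.some_ne_none _ h
  have htrace : ∀ n n' V, {z : Z | (some (n', z) : L) ∈ lev n V} = if n' = n then V else ∅ := by
    intro n n' V
    by_cases h : n' = n
    · subst h
      simp only [if_pos rfl]
      ext z
      simp [hlev_mem]
    · simp only [if_neg h]
      ext z
      simp [hlev_mem, h]
  have hlev_open : ∀ n V, IsOpen V → IsOpen (lev n V) := by
    intro n V hV
    rw [hopen_iff]
    refine ⟨fun n' => ?_, fun h => absurd h (hlev_none n V)⟩
    rw [htrace]
    split <;> simp [hV]
  have hlev_clopen : ∀ n V, IsClopen V → IsClopen (lev n V) := by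
    intro n V hV
    refine ⟨⟨?_⟩, hlev_open n V hV.isOpen⟩
    rw [hopen_iff]
    constructor
    · intro n'
      have : {z : Z | (some (n', z) : L) ∈ (lev n V)ᶜ} = (if n' = n then V else ∅)ᶜ := by
        rw [← htrace n n' V]; rfl
      rw [this]
      split <;> simp [hV.isClosed.isOpen_compl]
    · intro _
      refine ⟨Classical.arbitrary W, n + 1, fun n' hn' z _ => ?_⟩
      intro hmem
      rw [hlev_mem] at hmem
      omega
  -- basic neighborhoods of the point at infinity
  set Bnb : W → ℕ → Set L := fun α m =>
    {x : L | x = none ∨ ∃ n, m ≤ n ∧ ∃ z ∈ T α n, x = some (n, z)} with hBnbdef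
  have hBnb_none : ∀ α m, (none : L) ∈ Bnb α m := fun α m => Or.inl rfl
  have hBnb_mem : ∀ α m n z, ((some (n, z) : L) ∈ Bnb α m) ↔ (m ≤ n ∧ z ∈ T α n) := by
    intro α m n z
    simp only [hBnbdef, mem_setOf_eq]
    constructor
    · rintro (h | ⟨n', hn', z', hz', heq⟩)
      · exact (Option.some_ne_none _ h).elim
      · injection heq with h
        injection h with h1 h2
        subst h1; subst h2
        exact ⟨hn', hz'⟩
    · rintro ⟨hmn, hz⟩
      exact Or.inr ⟨n, hmn, z, hz, rfl⟩
  have hBnb_open : ∀ α m, IsOpen (Bnb α m) := by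
    intro α m
    rw [hopen_iff]
    constructor
    · intro n
      have : {z : Z | (some (n, z) : L) ∈ Bnb α m} = if m ≤ n then T α n else ∅ := by
        ext z
        rw [mem_setOf_eq, hBnb_mem]
        split <;> simp_all
      rw [this]
      split <;> simp [(hTclopen α n).isOpen]
    · intro _
      exact ⟨α, m, fun n hn z hz => (hBnb_mem α m n z).mpr ⟨hn, hz⟩⟩
  have hBnb_closed : ∀ α m, IsClosed (Bnb α m) := by
    intro α m
    constructor
    rw [hopen_iff]
    constructor
    · intro n
      have : {z : Z | (some (n, z) : L) ∈ (Bnb α m)ᶜ} = (if m ≤ n then T α n else ∅)ᶜ := by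
        ext z
        rw [mem_setOf_eq, mem_compl_iff, hBnb_mem]
        split <;> simp_all
      rw [this]
      split <;> simp [(hTclopen α n).isClosed.isOpen_compl]
    · intro h
      exact absurd (hBnb_none α m) h
  have hBnb_sub : ∀ (U : Set L), none ∈ U → IsOpen U → ∃ α m, Bnb α m ⊆ U := by
    intro U hnU hU
    obtain ⟨α, m, h⟩ := ((hopen_iff U).mp hU).2 hnU
    refine ⟨α, m, ?_⟩
    rintro x (rfl | ⟨n, hn, z, hz, rfl⟩)
    · exact hnU
    · exact h n hn z hz
  -- continuity of the level maps
  have he_cont : ∀ n : ℕ, Continuous (fun z : Z => (some (n, z) : L)) := by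
    intro n
    rw [continuous_def]
    intro U hU
    exact ((hopen_iff U).mp hU).1 n
  have hlev_univ : ∀ n, lev n univ = (fun z : Z => (some (n, z) : L)) '' univ := fun n => rfl
  -- σ-compactness
  have hSigma : SigmaCompactSpace L := by
    constructor
    refine ⟨fun k => Nat.rec {none} (fun n _ => lev n univ) k, fun k => ?_, ?_⟩
    · cases k with
      | zero => exact isCompact_singleton
      | succ n => exact isCompact_univ.image (he_cont n)
    · ext x
      simp only [mem_iUnion, mem_univ, iff_true]
      cases x with
      | none => exact ⟨0, rfl⟩
      | some p =>
        exact ⟨p.1 + 1, p.2, mem_univ _, rfl⟩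
  -- hereditary Lindelöfness
  have hHL : HereditarilyLindelofSpace L := by
    constructor
    intro t _
    have hdecomp : t = (t ∩ {none}) ∪ ⋃ n : ℕ, t ∩ lev n univ := by
      ext x
      constructor
      · intro hx
        cases x with
        | none => exact Or.inl ⟨hx, rfl⟩
        | some p => exact Or.inr (mem_iUnion.mpr ⟨p.1, hx, p.2, mem_univ _, rfl⟩)
      · rintro (h | h)
        · exact h.1
        · obtain ⟨n, hn⟩ := mem_iUnion.mp h
          exact hn.1
    rw [hdecomp]
    refine IsLindelof.union ?_ (isLindelof_iUnion fun n => ?_)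
    · exact (subsingleton_singleton.anti inter_subset_right).isLindelof
    · have : t ∩ lev n univ = (fun z : Z => (some (n, z) : L)) '' ((fun z : Z => (some (n, z) : L)) ⁻¹' t) := by
        ext x
        constructor
        · rintro ⟨hxt, z, -, rfl⟩
          exact ⟨z, hxt, rfl⟩
        · rintro ⟨z, hz, rfl⟩
          exact ⟨hz, z, mem_univ _, rfl⟩
      rw [this]
      exact (HereditarilyLindelof_LindelofSets _).image (he_cont n)
  -- Hausdorff
  have hT2 : T2Space L := by
    constructor
    intro x y hxy
    cases x with
    | none =>
      cases y with
      | none => exact absurd rfl hxy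
      | some p =>
        refine ⟨Bnb (Classical.arbitrary W) (p.1 + 1), lev p.1 univ,
          hBnb_open _ _, hlev_open _ _ isOpen_univ, hBnb_none _ _, ⟨p.2, mem_univ _, rfl⟩, ?_⟩
        rw [disjoint_left]
        rintro a ha ⟨z, -, rfl⟩
        rw [hBnb_mem] at ha
        omega
    | some p =>
      cases y with
      | none =>
        refine ⟨lev p.1 univ, Bnb (Classical.arbitrary W) (p.1 + 1),
          hlev_open _ _ isOpen_univ, hBnb_open _ _, ⟨p.2, mem_univ _, rfl⟩, hBnb_none _ _, ?_⟩
        rw [disjoint_left]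
        rintro a ⟨z, -, rfl⟩ ha
        rw [hBnb_mem] at ha
        omega
      | some q =>
        by_cases hpq : p.1 = q.1
        · have hz : p.2 ≠ q.2 := by
            intro h
            exact hxy (by rw [Option.some.injEq]; exact Prod.ext hpq h)
          obtain ⟨u, v, hu, hv, hpu, hqv, huv⟩ := t2_separation hz
          refine ⟨lev p.1 u, lev q.1 v, hlev_open _ _ hu, hlev_open _ _ hv,
            ⟨p.2, hpu, rfl⟩, ⟨q.2, hqv, rfl⟩, ?_⟩
          rw [disjoint_left]
          rintro a ⟨z, hz', rfl⟩ ⟨w, hw', heq⟩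
          injection heq with h
          injection h with h1 h2
          exact (huv.le_bot ⟨hz', h2 ▸ hw'⟩).elim
        · refine ⟨lev p.1 univ, lev q.1 univ, hlev_open _ _ isOpen_univ,
            hlev_open _ _ isOpen_univ, ⟨p.2, mem_univ _, rfl⟩, ⟨q.2, mem_univ _, rfl⟩, ?_⟩
          rw [disjoint_left]
          rintro a ⟨z, -, rfl⟩ ⟨w, -, heq⟩
          injection heq with h
          injection h with h1 h2
          exact hpq h1.symm
  -- clopen basis
  have hbasisL : IsTopologicalBasis {s : Set L | IsClopen s} := by
    refine isTopologicalBasis_of_isOpen_of_nhds (fun u hu => hu.isOpen) ?_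
    intro x U hxU hU
    cases x with
    | none =>
      obtain ⟨α, m, hsub⟩ := hBnb_sub U hxU hU
      exact ⟨Bnb α m, ⟨hBnb_closed α m, hBnb_open α m⟩, hBnb_none α m, hsub⟩
    | some p =>
      have htr : IsOpen {z : Z | (some (p.1, z) : L) ∈ U} := ((hopen_iff U).mp hU).1 p.1
      have hp2 : p.2 ∈ {z : Z | (some (p.1, z) : L) ∈ U} := by
        show (some (p.1, p.2) : L) ∈ U
        simpa using hxU
      obtain ⟨v, hv, hzv, hvsub⟩ := hZbasis.exists_subset_of_mem_open hp2 htr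
      refine ⟨lev p.1 v, hlev_clopen p.1 v hv, ⟨p.2, hzv, ?_⟩, ?_⟩
      · simp
      · rintro a ⟨z, hz, rfl⟩
        exact hvsub hz
  -- the key avoidance property of the point `none`
  have havoid : ∀ C : Set L, C.Countable → (none : L) ∉ C → (none : L) ∉ closure C := by
    intro C hC hnC
    have hD : ((fun x : L => (x.getD (0, Classical.arbitrary Z)).2) '' C).Countable :=
      hC.image _
    obtain ⟨α, hα⟩ := hTavoid _ hD
    intro hcl
    obtain ⟨x, hxB, hxC⟩ := mem_closure_iff.mp hcl (Bnb α 0) (hBnb_open α 0) (hBnb_none α 0)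
    cases x with
    | none => exact hnC hxC
    | some p =>
      rw [show (some p : L) = some (p.1, p.2) from rfl, hBnb_mem] at hxB
      refine (hα p.1).le_bot ⟨hxB.2, ?_⟩
      exact ⟨some p, hxC, rfl⟩
  -- not countably tight
  have hnCT : ¬ CountablyTight L := by
    intro hCT
    have hmem : (none : L) ∈ closure {x : L | x ≠ none} := by
      rw [mem_closure_iff]
      intro U hU hnU
      obtain ⟨α, m, h⟩ := ((hopen_iff U).mp hU).2 hnU
      obtain ⟨z, hz⟩ := hTne α m
      exact ⟨some (m, z), h m le_rfl z hz, by exact Option.some_ne_none _⟩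
    obtain ⟨C, hCsub, hCc, hCcl⟩ := hCT {x : L | x ≠ none} none hmem
    exact havoid C hCc (fun h => (hCsub h) rfl) hCcl
  -- closures of discrete sets are first countable
  haveI := hHL
  haveI := hT2
  have hdiscrete : ∀ D : Set L, DiscreteTopology ↥D → FirstCountableTopology ↥(closure D) := by
    intro D hdisc
    have hD'c : (D \ {none}).Countable := by
      haveI : DiscreteTopology ↥(D \ {none}) := DiscreteTopology.of_subset hdisc diff_subset
      exact (HereditarilyLindelof_LindelofSets (D \ {none})).countable this
    have hnone : (none : L) ∉ closure (D \ {none}) :=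
      havoid _ hD'c (fun h => h.2 rfl)
    have hclosD : closure D ⊆ closure (D \ {none}) ∪ {none} := by
      have h1 : D ⊆ (D \ {none}) ∪ {none} := by
        intro x hx
        by_cases h : x = none
        · exact Or.inr h
        · exact Or.inl ⟨hx, h⟩
      calc closure D ⊆ closure ((D \ {none}) ∪ {none}) := closure_mono h1
      _ = closure (D \ {none}) ∪ closure {none} := closure_union
      _ = closure (D \ {none}) ∪ {none} := by rw [isClosed_singleton.closure_eq]
    constructor
    rintro ⟨x, hx⟩
    cases x with
    | none =>
      -- none is isolated in closure D
      rw [mem_closure_iff] at hnone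
      push_neg at hnone
      obtain ⟨U₀, hU₀open, hnU₀, hU₀D'⟩ := hnone
      have hU₀cl : closure (D \ {none}) ⊆ U₀ᶜ := by
        refine closure_minimal (fun z hz hzU => ?_) hU₀open.isClosed_compl
        have h2 : z ∈ U₀ ∩ (D \ {none}) := ⟨hzU, hz⟩
        rw [hU₀D'] at h2
        exact h2
      have hsingle : (Subtype.val ⁻¹' U₀ : Set ↥(closure D)) = {⟨none, hx⟩} := by
        ext ⟨y, hy⟩
        simp only [mem_preimage, mem_singleton_iff, Subtype.mk.injEq]
        constructor
        · intro hyU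
          rcases hclosD hy with h | h
          · exact absurd hyU (hU₀cl h)
          · exact h
        · rintro rfl
          exact hnU₀
      have hopen : IsOpen ({⟨none, hx⟩} : Set ↥(closure D)) := by
        rw [← hsingle]
        exact hU₀open.preimage continuous_subtype_val
      rw [(isOpen_singleton_iff_nhds_eq_pure _).mp hopen, ← Filter.principal_singleton]
      infer_instance
    | some p =>
      have hfcL : (𝓝 (some p : L)).IsCountablyGenerated := by
        obtain ⟨b, hb⟩ := (𝓝 p.2).exists_antitone_basis
        have hbasis : (𝓝 (some p : L)).HasBasis (fun _ : ℕ => True)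
            (fun k => lev p.1 (b k)) := by
          constructor
          intro t
          constructor
          · intro ht
            obtain ⟨U, hUt, hUopen, hxU⟩ := mem_nhds_iff.mp ht
            have htr : IsOpen {z : Z | (some (p.1, z) : L) ∈ U} := ((hopen_iff U).mp hUopen).1 p.1
            have hp2 : p.2 ∈ {z : Z | (some (p.1, z) : L) ∈ U} := by
              show (some (p.1, p.2) : L) ∈ U
              simpa using hxU
            obtain ⟨k, -, hk⟩ := hb.toHasBasis.mem_iff.mp (htr.mem_nhds hp2)
            refine ⟨k, trivial, ?_⟩
            rintro a ⟨z, hz, rfl⟩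
            exact hUt (hk hz)
          · rintro ⟨k, -, hsub⟩
            refine mem_nhds_iff.mpr ⟨lev p.1 (interior (b k)), ?_, hlev_open _ _ isOpen_interior, ?_⟩
            · exact fun a ⟨z, hz, he⟩ => hsub ⟨z, interior_subset hz, he⟩
            · exact ⟨p.2, mem_interior_iff_mem_nhds.mpr (hb.toHasBasis.mem_of_mem trivial), by simp⟩
        exact hbasis.isCountablyGenerated
      rw [nhds_subtype_eq_comap]
      exact @Filter.comap.isCountablyGenerated _ _ _ hfcL _
  exact ⟨hSigma, hHL, hT2, hbasisL, hnCT, hdiscrete⟩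

end PartII

end PartIISec
end Chain
end Aux

/-- If there is a 0-dimensional compact L-space, then there is a σ-compact,
hereditarily Lindelöf, 0-dimensional Hausdorff space that is not countably tight
but in which the closure of every discrete subset is first countable. -/
theorem tkachuk_counterexample_of_compact_Lspace
    (h : ∃ (X : Type) (tX : TopologicalSpace X), @ZeroDimCompactLSpace X tX) :
    ∃ (Y : Type) (tY : TopologicalSpace Y), @TkachukCounterexample Y tY := by
  classical
  obtain ⟨X, tX, hcpt, ht2, hhl, hnsep, hbasis⟩ := h
  haveI := hcpt; haveI := ht2; haveI := hhl
  obtain ⟨K, hKne, hKclosed, c, hc_closed, hc_mono, hcK, hc_cover, hc_nwd⟩ :=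
    exists_chain hnsep
  haveI : CompactSpace ↥K := isCompact_iff_compactSpace.mp hKclosed.isCompact
  haveI : HereditarilyLindelofSpace ↥K := hl_subtype K
  haveI : FirstCountableTopology ↥K := firstCountable_of_chl
  haveI : Nonempty ↥K := hKne.to_subtype
  haveI : Nonempty {o : Ordinal.{0} // o < om1} :=
    ⟨⟨0, (Cardinal.isSuccLimit_ord (Cardinal.aleph0_le_aleph 1)).pos⟩⟩
  have hZbasis := clopen_basis_subtype hbasis K
  set c' : {o : Ordinal.{0} // o < om1} → Set ↥K :=
    fun α => Subtype.val ⁻¹' (c α) with hc'def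
  have hc'closed : ∀ α, IsClosed (c' α) :=
    fun α => (hc_closed α).preimage continuous_subtype_val
  have hc'mono : ∀ α β, α ≤ β → c' α ⊆ c' β :=
    fun α β hab z hz => hc_mono α β hab hz
  have hc'cover : ∀ z : ↥K, ∃ α, z ∈ c' α := fun z => hc_cover z.1 z.2
  have hc'nwd : ∀ α (V : Set ↥K), IsOpen V → V.Nonempty → ¬ (V ⊆ c' α) := by
    intro α V hV hVne hsub
    obtain ⟨V₀, hV₀, rfl⟩ := isOpen_induced_iff.mp hV
    obtain ⟨z, hz⟩ := hVne
    refine hc_nwd α V₀ hV₀ ⟨z.1, hz, z.2⟩ ?_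
    intro y hy
    exact hsub (show (⟨y, hy.2⟩ : ↥K) ∈ _ from hy.1)
  obtain ⟨T, hT1, hT2', hT3, hT4⟩ := exists_tower hZbasis c' hc'closed hc'mono hc'cover hc'nwd
  exact ⟨Option (ℕ × ↥K), Ltop T hT3,
    partII T hT1 hT2' hT3 hT4 hZbasis⟩
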